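/- The family of behaviors of deterministic splitters is not closed under Kleene star: over the alphabet A = {a,b} (a ≠ b), with L = {(b, aⁿ, baⁿ) : n ∈ ℕ} ⊆ U, the Kleene star L* (the submonoid-closure {x₁⋯x_k : k ≥ 0, each x_i ∈ L}) is not the behavior of any deterministic splitter, although L itself is the behavior of a deterministic splitter with finitely many states. -/

import Mathlib

/-- Words over the alphabet `A`, i.e. elements of the free monoid `A*`. -/
abbrev Word (A : Type) := List A

/-- The generating set `G = {(a,ε,a) : a ∈ A} ∪ {(ε,a,a) : a ∈ A}` of the
Shuffling Monoid. -/
def genG (A : Type) : Set (Word A × Word A × Word A) :=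
  {g | ∃ a : A, g = ([a], [], [a]) ∨ g = ([], [a], [a])}

/-- Componentwise product (concatenation) of a list of triples of words. -/
def prodTriple {A : Type} (ls : List (Word A × Word A × Word A)) :
    Word A × Word A × Word A :=
  ((ls.map fun l => l.1).flatten, (ls.map fun l => l.2.1).flatten,
    (ls.map fun l => l.2.2).flatten)

/-- The Shuffling Monoid `U`: the submonoid of `A* × A* × A*` generated by `G`,
described as the set of all products of finite sequences of generators. -/
def shuffleU (A : Type) : Set (Word A × Word A × Word A) :=
  {m | ∃ ls : List (Word A × Word A × Word A), (∀ l ∈ ls, l ∈ genG A) ∧ prodTriple ls = m}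

/-- A spliffer (equivalently, splitter) over `A`: a finite automaton whose
transitions are labeled by elements of `G`. -/
structure Spliffer (A : Type) where
  Q : Type
  finQ : Finite Q
  E : Q → (Word A × Word A × Word A) → Q → Prop
  I : Set Q
  T : Set Q
  labels_mem : ∀ {q l q'}, E q l q' → l ∈ genG A

/-- Paths in a spliffer, recording the sequence of labels. -/
inductive Spliffer.Path {A : Type} (S : Spliffer A) :
    S.Q → List (Word A × Word A × Word A) → S.Q → Prop
  | nil (q : S.Q) : Spliffer.Path S q [] q
  | cons {q q' q'' : S.Q} {l : Word A × Word A × Word A}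
      {ls : List (Word A × Word A × Word A)} :
      S.E q l q' → Spliffer.Path S q' ls q'' → Spliffer.Path S q (l :: ls) q''

/-- The behavior `|S|` of a spliffer: products of the label sequences of all
successful runs. -/
def Spliffer.behavior {A : Type} (S : Spliffer A) : Set (Word A × Word A × Word A) :=
  {m | ∃ q ∈ S.I, ∃ q' ∈ S.T, ∃ ls, S.Path q ls q' ∧ prodTriple ls = m}

/-- A splitter is deterministic if it has a single initial state, for every state
and input letter there is at most one outgoing transition reading that letter,
and all transitions leaving a given state write to the same tape. -/
def Spliffer.Deterministic {A : Type} (S : Spliffer A) : Prop :=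
  (∃! i, i ∈ S.I) ∧
  (∀ ⦃q l₁ q₁ l₂ q₂⦄, S.E q l₁ q₁ → S.E q l₂ q₂ → l₁.2.2 = l₂.2.2 → l₁ = l₂ ∧ q₁ = q₂) ∧
  (∀ ⦃q l₁ q₁ l₂ q₂⦄, S.E q l₁ q₁ → S.E q l₂ q₂ →
    (l₁.1 = [] ∧ l₂.1 = []) ∨ (l₁.2.1 = [] ∧ l₂.2.1 = []))

/-- The set `L = {(b, aⁿ, baⁿ) : n ∈ ℕ}`. -/
def setLb {A : Type} (a b : A) : Set (Word A × Word A × Word A) :=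
  {x | ∃ n : ℕ, x = ([b], List.replicate n a, b :: List.replicate n a)}

section Aux

variable {A : Type}

/-- The deterministic splitter recognizing `L`. -/
def splM (a b : A) : Spliffer A where
  Q := Bool
  finQ := inferInstance
  E q l q' := (q = false ∧ l = ([b], [], [b]) ∧ q' = true) ∨
    (q = true ∧ l = ([], [a], [a]) ∧ q' = true)
  I := {false}
  T := {true}
  labels_mem := by
    rintro q l q' (⟨_, rfl, _⟩ | ⟨_, rfl, _⟩)
    · exact ⟨b, Or.inl rfl⟩
    · exact ⟨a, Or.inr rfl⟩

lemma flatten_replicate_singleton (n : ℕ) (a : A) :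
    (List.replicate n [a]).flatten = List.replicate n a := by
  induction n with
  | zero => rfl
  | succ n ih => simp [List.replicate_succ, ih]

lemma prod_replicate (a b : A) (n : ℕ) :
    prodTriple (([b], ([] : Word A), [b]) :: List.replicate n (([] : Word A), [a], [a]))
      = ([b], List.replicate n a, b :: List.replicate n a) := by
  simp [prodTriple, List.map_replicate, flatten_replicate_singleton]

lemma path_replicate (a b : A) (n : ℕ) :
    (splM a b).Path true (List.replicate n (([] : Word A), [a], [a])) true := by
  induction n with
  | zero => exact Spliffer.Path.nil _
  | succ n ih =>
      rw [List.replicate_succ]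
      exact Spliffer.Path.cons (Or.inr ⟨rfl, rfl, rfl⟩) ih

lemma path_from_true (a b : A) : ∀ {q : (splM a b).Q} {ls q'},
    (splM a b).Path q ls q' → q = true →
      ls = List.replicate ls.length (([] : Word A), [a], [a]) ∧ q' = true := by
  intro q ls q' hp
  induction hp with
  | nil q => exact fun h => ⟨rfl, h⟩
  | cons he hp ih =>
      rintro rfl
      rcases he with ⟨h, _⟩ | ⟨_, rfl, rfl⟩
      · exact absurd h (by simp)
      · obtain ⟨h1, h2⟩ := ih rfl
        refine ⟨?_, h2⟩
        simp [List.replicate_succ]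
        exact h1

lemma splM_behavior (a b : A) : (splM a b).behavior = setLb a b := by
  ext m
  constructor
  · rintro ⟨q, hq, q', hq', ls, hp, rfl⟩
    have hq : q = false := hq
    have hq' : q' = true := hq'
    subst hq; subst hq'
    rcases hp with _ | ⟨he, hp⟩
    case cons =>
        rcases he with ⟨_, rfl, rfl⟩ | ⟨h, _⟩
        · obtain ⟨h1, _⟩ := path_from_true a b hp rfl
          rw [h1]
          exact ⟨_, prod_replicate a b _⟩
        · exact absurd h (by simp)
  · rintro ⟨n, rfl⟩
    exact ⟨false, rfl, true, rfl, _,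
      Spliffer.Path.cons (Or.inl ⟨rfl, rfl, rfl⟩) (path_replicate a b n),
      prod_replicate a b n⟩

lemma splM_det (a b : A) : (splM a b).Deterministic := by
  refine ⟨⟨false, rfl, fun y hy => hy⟩, ?_, ?_⟩
  · rintro q l₁ q₁ l₂ q₂ (⟨rfl, rfl, rfl⟩ | ⟨rfl, rfl, rfl⟩) (⟨h, rfl, rfl⟩ | ⟨h, rfl, rfl⟩) h3 <;>
      simp_all <;> rfl
  · rintro q l₁ q₁ l₂ q₂ (⟨rfl, rfl, rfl⟩ | ⟨rfl, rfl, rfl⟩) (⟨h, rfl, rfl⟩ | ⟨h, rfl, rfl⟩) <;>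
      simp_all

lemma path_labels_mem {S : Spliffer A} : ∀ {q ls q'},
    S.Path q ls q' → ∀ l ∈ ls, l ∈ genG A := by
  intro q ls q' hp
  induction hp with
  | nil q => simp
  | cons he hp ih =>
      intro l hl
      rcases List.mem_cons.mp hl with rfl | hl
      · exact S.labels_mem he
      · exact ih l hl

lemma forced_len2 {ls : List (Word A × Word A × Word A)} {c d : A}
    (hG : ∀ l ∈ ls, l ∈ genG A)
    (h3 : (ls.map fun l => l.2.2).flatten = [c, d]) :
    ∃ l₀ l₁, ls = [l₀, l₁] ∧ l₀.2.2 = [c] ∧ l₁.2.2 = [d] := by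
  match ls with
  | [] => simp at h3
  | [l₀] =>
      obtain ⟨x, hx | hx⟩ := hG l₀ (by simp) <;> subst hx <;> simp_all
  | l₀ :: l₁ :: rest =>
      obtain ⟨x, hx | hx⟩ := hG l₀ (by simp) <;>
      obtain ⟨y, hy | hy⟩ := hG l₁ (by simp [hx]) <;>
      · subst hx; subst hy
        simp only [List.map_cons, List.flatten_cons, List.cons_append,
          List.singleton_append] at h3
        obtain ⟨rfl, rfl, hrest⟩ : x = c ∧ y = d ∧
            ((rest.map fun l => l.2.2).flatten) = [] := by
          constructor
          · exact (List.cons.injEq _ _ _ _ ▸ h3).1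
          · have := (List.cons.injEq _ _ _ _ ▸ h3).2
            exact ⟨(List.cons.injEq _ _ _ _ ▸ this).1, (List.cons.injEq _ _ _ _ ▸ this).2⟩
        have : rest = [] := by
          cases rest with
          | nil => rfl
          | cons r rs =>
              obtain ⟨z, hz | hz⟩ := hG r (by simp) <;> subst hz <;> simp_all
        subst this
        exact ⟨_, _, rfl, rfl, rfl⟩

lemma forced1 (a b : A) (hab : a ≠ b) {ls : List (Word A × Word A × Word A)}
    (hG : ∀ l ∈ ls, l ∈ genG A)
    (h : prodTriple ls = ([b], [a], [b, a])) :
    ls = [([b], [], [b]), ([], [a], [a])] := by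
  have h3 := congrArg (fun p => p.2.2) h
  have h2 := congrArg (fun p => p.2.1) h
  have h1 := congrArg (fun p => p.1) h
  simp only [prodTriple] at h1 h2 h3
  obtain ⟨l₀, l₁, rfl, e₀, e₁⟩ := forced_len2 hG h3
  obtain ⟨x, hx | hx⟩ := hG l₀ (by simp) <;>
  obtain ⟨y, hy | hy⟩ := hG l₁ (by simp) <;>
    subst hx <;> subst hy <;> simp_all [prodTriple] <;> simp_all [eq_comm]

lemma forced2 (a b : A) (hab : a ≠ b) {ls : List (Word A × Word A × Word A)}
    (hG : ∀ l ∈ ls, l ∈ genG A)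
    (h : prodTriple ls = ([b, b], [], [b, b])) :
    ls = [([b], [], [b]), ([b], [], [b])] := by
  have h3 := congrArg (fun p => p.2.2) h
  have h2 := congrArg (fun p => p.2.1) h
  have h1 := congrArg (fun p => p.1) h
  simp only [prodTriple] at h1 h2 h3
  obtain ⟨l₀, l₁, rfl, e₀, e₁⟩ := forced_len2 hG h3
  obtain ⟨x, hx | hx⟩ := hG l₀ (by simp) <;>
  obtain ⟨y, hy | hy⟩ := hG l₁ (by simp) <;>
    subst hx <;> subst hy <;> simp_all [prodTriple] <;> simp_all [eq_comm]

end Aux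

/-- over `A = {a,b}`, with `L = {(b, aⁿ, baⁿ) : n ∈ ℕ}`, the Kleene
star `L*` (all finite products of elements of `L`) is not the behavior of any
deterministic splitter, although `L` is. -/


theorem drat_not_closed_under_star {A : Type} (a b : A) (hab : a ≠ b)
    (hA : ∀ x : A, x = a ∨ x = b) :
    (∃ S : Spliffer A, S.Deterministic ∧ S.behavior = setLb a b) ∧
    ¬ ∃ S : Spliffer A, S.Deterministic ∧ S.behavior =
        {m : Word A × Word A × Word A | ∃ ls : List (Word A × Word A × Word A),
          (∀ x ∈ ls, x ∈ setLb a b) ∧ prodTriple ls = m} := by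
  constructor
  · exact ⟨splM a b, splM_det a b, splM_behavior a b⟩
  · rintro ⟨S, ⟨⟨i, hi, huniq⟩, hdet2, hdet3⟩, hbeh⟩
    -- x₁ = ([b],[a],[b,a]) is in the star
    have hx1 : (([b], [a], [b, a]) : Word A × Word A × Word A) ∈ S.behavior := by
      rw [hbeh]
      refine ⟨[([b], [a], [b, a])], ?_, ?_⟩
      · rintro x hx
        rcases List.mem_singleton.mp hx with rfl
        exact ⟨1, rfl⟩
      · simp [prodTriple]
    have hx2 : (([b, b], [], [b, b]) : Word A × Word A × Word A) ∈ S.behavior := by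
      rw [hbeh]
      refine ⟨[([b], [], [b]), ([b], [], [b])], ?_, ?_⟩
      · rintro x hx
        rcases List.mem_cons.mp hx with rfl | hx
        · exact ⟨0, rfl⟩
        · rcases List.mem_singleton.mp hx with rfl
          exact ⟨0, rfl⟩
      · simp [prodTriple]
    obtain ⟨q₀, hq₀, t₁, ht₁, ls₁, hp₁, hpr₁⟩ := hx1
    obtain ⟨q₀', hq₀', t₂, ht₂, ls₂, hp₂, hpr₂⟩ := hx2
    have hq0 : q₀ = i := huniq _ hq₀
    have hq0' : q₀' = i := huniq _ hq₀'
    subst hq0; subst hq0'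
    have hls1 : ls₁ = [([b], [], [b]), ([], [a], [a])] :=
      forced1 a b hab (path_labels_mem hp₁) hpr₁
    have hls2 : ls₂ = [([b], [], [b]), ([b], [], [b])] :=
      forced2 a b hab (path_labels_mem hp₂) hpr₂
    subst hls1; subst hls2
    -- extract transitions
    rcases hp₁ with _ | ⟨he₁, hp₁⟩
    rcases hp₁ with _ | ⟨he₁', hp₁⟩
    rcases hp₂ with _ | ⟨he₂, hp₂⟩
    rcases hp₂ with _ | ⟨he₂', hp₂⟩
    -- same state after first step
    obtain ⟨-, hqeq⟩ := hdet2 he₁ he₂ rfl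
    subst hqeq
    -- contradiction with tape condition
    rcases hdet3 he₁' he₂' with ⟨-, h1⟩ | ⟨h2, -⟩
    · exact absurd h1 (by simp)
    · exact absurd h2 (by simp)
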